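/- The function v(t,x) = 2^{1/4}(1−t)^{3/4}√(x(1−x)) satisfies the HJB equation ∂_t v(t,x) + sup_{σ ≥ 0} { (1/2)σ² ∂²ₓₓ v(t,x) + σ^{1/2} } = 0 for all (t,x) ∈ [0,1) × (0,1), and the supremum is attained uniquely at σ = √(2/(1−t))·x(1−x). -/

import Mathlib

noncomputable def vHalf (t x : ℝ) : ℝ :=
  (2 : ℝ) ^ ((1 : ℝ) / 4) * (1 - t) ^ ((3 : ℝ) / 4) * Real.sqrt (x * (1 - x))

noncomputable def sigmaBarHalf (t x : ℝ) : ℝ := Real.sqrt (2 / (1 - t)) * (x * (1 - x))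

lemma hjb_aux (D σb dt : ℝ) (hσb : 0 < σb) (hkey : 2 * (Real.sqrt σb) ^ 3 * D = -1)
    (hdt : dt = -(3 / 4) * Real.sqrt σb) :
    dt + ((1 / 2) * σb ^ 2 * D + σb ^ ((1 : ℝ) / 2)) = 0 ∧
    IsGreatest {y : ℝ | ∃ σ : ℝ, 0 ≤ σ ∧ y = (1 / 2) * σ ^ 2 * D + σ ^ ((1 : ℝ) / 2)}
      ((1 / 2) * σb ^ 2 * D + σb ^ ((1 : ℝ) / 2)) ∧
    ∀ σ ∈ Set.Ici (0 : ℝ),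
      ((1 / 2) * σ ^ 2 * D + σ ^ ((1 : ℝ) / 2)) = ((1 / 2) * σb ^ 2 * D + σb ^ ((1 : ℝ) / 2)) →
      IsMaxOn (fun σ => (1 / 2) * σ ^ 2 * D + σ ^ ((1 : ℝ) / 2)) (Set.Ici (0 : ℝ)) σ →
        σ = σb := by
  set u := Real.sqrt σb with hu
  have hupos : 0 < u := Real.sqrt_pos.mpr hσb
  have hσu : σb = u ^ 2 := (Real.sq_sqrt hσb.le).symm
  have hrp : σb ^ ((1 : ℝ) / 2) = u := by rw [← Real.sqrt_eq_rpow]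
  have hub : ∀ σ : ℝ, 0 ≤ σ →
      (1 / 2) * σ ^ 2 * D + σ ^ ((1 : ℝ) / 2) ≤ (1 / 2) * σb ^ 2 * D + σb ^ ((1 : ℝ) / 2) := by
    intro σ hσ
    set w := Real.sqrt σ with hw
    have hwpos : 0 ≤ w := Real.sqrt_nonneg σ
    have hσw : σ = w ^ 2 := (Real.sq_sqrt hσ).symm
    have hrpw : σ ^ ((1 : ℝ) / 2) = w := by rw [← Real.sqrt_eq_rpow]
    rw [hrp, hrpw, hσu, hσw]
    have hfact : ((1 / 2) * (u ^ 2) ^ 2 * D + u) - ((1 / 2) * (w ^ 2) ^ 2 * D + w)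
        = ((w - u) ^ 2 * (w ^ 2 + 2 * w * u + 3 * u ^ 2)) / (4 * u ^ 3) := by
      have hD : D = -1 / (2 * u ^ 3) := by
        field_simp
        linarith [hkey]
      rw [hD]
      field_simp
      ring
    nlinarith [sq_nonneg (w - u), mul_nonneg (sq_nonneg (w - u))
      (by positivity : (0:ℝ) ≤ w ^ 2 + 2 * w * u + 3 * u ^ 2), pow_pos hupos 3]
  refine ⟨?_, ⟨⟨σb, hσb.le, rfl⟩, ?_⟩, ?_⟩
  · rw [hdt, hrp, hσu]
    linear_combination ((1 : ℝ) / 4 * u) * hkey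
  · rintro y ⟨σ, hσ, rfl⟩
    exact hub σ hσ
  · intro σ hσ heq _
    set w := Real.sqrt σ with hw
    have hwpos : 0 ≤ w := Real.sqrt_nonneg σ
    have hσw : σ = w ^ 2 := (Real.sq_sqrt hσ).symm
    have hrpw : σ ^ ((1 : ℝ) / 2) = w := by rw [← Real.sqrt_eq_rpow]
    rw [hrp, hrpw, hσu, hσw] at heq
    have h0 : (w - u) ^ 2 * (w ^ 2 + 2 * w * u + 3 * u ^ 2) = 0 := by
      linear_combination (-4 * u ^ 3) * heq + (w ^ 4 - u ^ 4) * hkey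
    have hpos : 0 < w ^ 2 + 2 * w * u + 3 * u ^ 2 := by
      nlinarith [mul_nonneg hwpos hupos.le, sq_nonneg w, pow_pos hupos 2]
    have hwu : w = u := by
      have h2 : (w - u) ^ 2 = 0 := by
        rcases mul_eq_zero.mp h0 with h | h
        · exact h
        · exact absurd h hpos.ne'
      have := pow_eq_zero_iff (n := 2) (by norm_num) |>.mp h2
      linarith
    rw [hσw, hwu, ← hσu]

lemma hasDerivAt_g (y : ℝ) : HasDerivAt (fun z : ℝ => z * (1 - z)) (1 - 2 * y) y := by
  have h := (hasDerivAt_id y).mul ((hasDerivAt_const y (1 : ℝ)).sub (hasDerivAt_id y))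
  refine h.congr_deriv ?_
  simp only [id_eq, Pi.sub_apply]
  ring

lemma hasDerivAt_vHalf_x (t : ℝ) {y : ℝ} (hy : y ∈ Set.Ioo (0 : ℝ) 1) :
    HasDerivAt (fun z => vHalf t z)
      ((2 : ℝ) ^ ((1 : ℝ) / 4) * (1 - t) ^ ((3 : ℝ) / 4) *
        ((1 - 2 * y) / (2 * Real.sqrt (y * (1 - y))))) y := by
  have hg : 0 < y * (1 - y) := mul_pos hy.1 (by linarith [hy.2])
  have hs := (hasDerivAt_g y).sqrt hg.ne'
  exact hs.const_mul _

lemma second_deriv_vHalf (t : ℝ) {x : ℝ} (hx : x ∈ Set.Ioo (0 : ℝ) 1) :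
    deriv (fun y => deriv (fun z => vHalf t z) y) x
      = -((2 : ℝ) ^ ((1 : ℝ) / 4) * (1 - t) ^ ((3 : ℝ) / 4)) /
          (4 * (x * (1 - x)) * Real.sqrt (x * (1 - x))) := by
  have hg : 0 < x * (1 - x) := mul_pos hx.1 (by linarith [hx.2])
  set s := Real.sqrt (x * (1 - x)) with hs
  have hspos : 0 < s := Real.sqrt_pos.mpr hg
  have hs2 : s ^ 2 = x * (1 - x) := Real.sq_sqrt hg.le
  have heq : (fun y => deriv (fun z => vHalf t z) y) =ᶠ[nhds x]
      (fun y => (2 : ℝ) ^ ((1 : ℝ) / 4) * (1 - t) ^ ((3 : ℝ) / 4) *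
        ((1 - 2 * y) / (2 * Real.sqrt (y * (1 - y))))) := by
    filter_upwards [Ioo_mem_nhds hx.1 hx.2] with y hy using (hasDerivAt_vHalf_x t hy).deriv
  rw [heq.deriv_eq]
  have hnum : HasDerivAt (fun y : ℝ => 1 - 2 * y) (-2) x := by
    have h := (hasDerivAt_const x (1 : ℝ)).sub ((hasDerivAt_id x).const_mul 2)
    refine h.congr_deriv ?_
    ring
  have hden : HasDerivAt (fun y : ℝ => 2 * Real.sqrt (y * (1 - y)))
      (2 * ((1 - 2 * x) / (2 * s))) x := ((hasDerivAt_g x).sqrt hg.ne').const_mul 2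
  have hden_ne : 2 * s ≠ 0 := by positivity
  have hdiv := hnum.div hden (by simpa using hden_ne)
  have htot := hdiv.const_mul ((2 : ℝ) ^ ((1 : ℝ) / 4) * (1 - t) ^ ((3 : ℝ) / 4))
  simp only [Pi.div_def] at htot
  rw [htot.deriv, ← hs, ← hs2]
  field_simp
  linear_combination ((-16 : ℝ) * (1 - t) ^ ((3 : ℝ) / 4)) * hs2

lemma time_deriv_vHalf {t : ℝ} (ht : t ∈ Set.Ico (0 : ℝ) 1) (x : ℝ) :
    deriv (fun s => vHalf s x) t
      = -(3 / 4) * ((2 : ℝ) ^ ((1 : ℝ) / 4) * (1 - t) ^ (-(1 : ℝ) / 4) *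
          Real.sqrt (x * (1 - x))) := by
  have hP : 0 < 1 - t := by linarith [ht.2]
  have hr : HasDerivAt (fun s : ℝ => (1 - s) ^ ((3 : ℝ) / 4))
      ((0 - 1) * ((3 : ℝ) / 4) * (1 - t) ^ ((3 : ℝ) / 4 - 1)) t :=
    ((hasDerivAt_const t (1 : ℝ)).sub (hasDerivAt_id t)).rpow_const (Or.inl hP.ne')
  have htot := (hr.const_mul ((2 : ℝ) ^ ((1 : ℝ) / 4))).mul_const (Real.sqrt (x * (1 - x)))
  rw [show (fun s => vHalf s x) = fun s =>
    (2 : ℝ) ^ ((1 : ℝ) / 4) * (1 - s) ^ ((3 : ℝ) / 4) * Real.sqrt (x * (1 - x)) from rfl]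
  rw [htot.deriv]
  rw [show (3 : ℝ) / 4 - 1 = -(1 : ℝ) / 4 by norm_num]
  ring

lemma sqrt_sigmaBar {t x : ℝ} (ht : t ∈ Set.Ico (0 : ℝ) 1) (hx : x ∈ Set.Ioo (0 : ℝ) 1) :
    Real.sqrt (sigmaBarHalf t x)
      = (2 : ℝ) ^ ((1 : ℝ) / 4) * ((1 - t) ^ ((1 : ℝ) / 4))⁻¹ * Real.sqrt (x * (1 - x)) := by
  have hP : 0 < 1 - t := by linarith [ht.2]
  have hr : (0 : ℝ) < 2 / (1 - t) := by positivity
  rw [sigmaBarHalf, Real.sqrt_mul (Real.sqrt_nonneg _)]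
  congr 1
  rw [Real.sqrt_eq_rpow, Real.sqrt_eq_rpow, ← Real.rpow_mul hr.le]
  norm_num
  rw [Real.div_rpow (by norm_num) hP.le, div_eq_mul_inv]

theorem hjb_p_half :
    ∀ t ∈ Set.Ico (0 : ℝ) 1, ∀ x ∈ Set.Ioo (0 : ℝ) 1,
      let Dxx : ℝ := deriv (fun y => deriv (fun z => vHalf t z) y) x
      let F : ℝ → ℝ := fun σ => (1 / 2) * σ ^ 2 * Dxx + σ ^ ((1 : ℝ) / 2)
      deriv (fun s => vHalf s x) t + F (sigmaBarHalf t x) = 0 ∧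
      IsGreatest {y : ℝ | ∃ σ : ℝ, 0 ≤ σ ∧ y = F σ} (F (sigmaBarHalf t x)) ∧
      ∀ σ ∈ Set.Ici (0 : ℝ), F σ = F (sigmaBarHalf t x) → IsMaxOn F (Set.Ici (0 : ℝ)) σ →
        σ = sigmaBarHalf t x := by
  intro t ht x hx
  have hP : 0 < 1 - t := by linarith [ht.2]
  have hg : 0 < x * (1 - x) := mul_pos hx.1 (by linarith [hx.2])
  set s := Real.sqrt (x * (1 - x)) with hs
  have hspos : 0 < s := Real.sqrt_pos.mpr hg
  have hs2 : s ^ 2 = x * (1 - x) := Real.sq_sqrt hg.le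
  set c := (2 : ℝ) ^ ((1 : ℝ) / 4) with hc
  have hcpos : 0 < c := Real.rpow_pos_of_pos (by norm_num) _
  have hc4 : c ^ 4 = 2 := by
    rw [hc, ← Real.rpow_natCast ((2:ℝ) ^ ((1:ℝ)/4)) 4, ← Real.rpow_mul (by norm_num)]
    norm_num
  set q := (1 - t) ^ ((1 : ℝ) / 4) with hq
  have hqpos : 0 < q := Real.rpow_pos_of_pos hP _
  have hq3 : q ^ 3 = (1 - t) ^ ((3 : ℝ) / 4) := by
    rw [hq, ← Real.rpow_natCast ((1 - t) ^ ((1:ℝ)/4)) 3, ← Real.rpow_mul hP.le]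
    norm_num
  have hσpos : 0 < sigmaBarHalf t x :=
    mul_pos (Real.sqrt_pos.mpr (by positivity)) hg
  have hu : Real.sqrt (sigmaBarHalf t x) = c * q⁻¹ * s := sqrt_sigmaBar ht hx
  intro Dxx F
  have hD : Dxx = -(c * q ^ 3) / (4 * s ^ 2 * s) := by
    have h0 := second_deriv_vHalf t hx
    rw [hq3, hs2]
    exact h0
  have hkey : 2 * (Real.sqrt (sigmaBarHalf t x)) ^ 3 * Dxx = -1 := by
    rw [hu, hD]
    field_simp
    linear_combination (-2 : ℝ) * hc4
  have hdt : deriv (fun s => vHalf s x) t = -(3 / 4) * Real.sqrt (sigmaBarHalf t x) := by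
    rw [time_deriv_vHalf ht x, hu, show (-(1:ℝ)/4) = -((1:ℝ)/4) by norm_num,
      Real.rpow_neg hP.le, ← hs, ← hc, ← hq]
  exact hjb_aux Dxx (sigmaBarHalf t x) (deriv (fun s => vHalf s x) t) hσpos hkey hdt
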